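/- arXiv:1004.5499 — 4 statements merged into one kernel-verified Lean document; each statement's English description precedes it below -/
import Mathlib

section
/- Let f ∈ C¹([α,β]) with α < β. Then as ε → 0⁺, ∫_α^β f(s)/√((s+ε-α)(s-α)) ds = -f(α) log ε + η + O(ε log ε), where η = f(α) log(4(β-α)) + ∫_α^β (f(s) - f(α))/(s-α) ds. -/
open Filter Asymptotics Topology Real
open MeasureTheory Set

private lemma aux_int_g {L ε : ℝ} (hL : 0 < L) (hε : 0 < ε) :
    IntervalIntegrable (fun t => 1 / Real.sqrt ((t + ε) * t)) volume 0 L := by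
  have hmeas : AEStronglyMeasurable (fun t => 1 / Real.sqrt ((t + ε) * t))
      (volume.restrict (Set.uIoc (0:ℝ) L)) := by
    rw [Set.uIoc_of_le hL.le]
    refine ContinuousOn.aestronglyMeasurable ?_ measurableSet_Ioc
    refine ContinuousOn.div continuousOn_const
      (Real.continuous_sqrt.comp (by continuity)).continuousOn ?_
    intro t ht
    exact (Real.sqrt_pos.2 (by nlinarith [ht.1] : (0:ℝ) < (t + ε) * t)).ne'
  refine IntervalIntegrable.mono_fun'
    (g := fun t => (Real.sqrt ε)⁻¹ * t ^ (-(1/2) : ℝ)) ?_ hmeas ?_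
  · exact (intervalIntegral.intervalIntegrable_rpow' (by norm_num)).const_mul _
  · rw [Set.uIoc_of_le hL.le, Filter.EventuallyLE, ae_restrict_iff' measurableSet_Ioc]
    refine ae_of_all _ fun t ht => ?_
    have ht0 : 0 < t := ht.1
    have h1 : Real.sqrt (ε * t) ≤ Real.sqrt ((t + ε) * t) :=
      Real.sqrt_le_sqrt (by nlinarith)
    have h2 : 0 < Real.sqrt (ε * t) := Real.sqrt_pos.2 (by positivity)
    have h3 : (1 : ℝ) / Real.sqrt ((t + ε) * t) ≤ 1 / Real.sqrt (ε * t) :=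
      one_div_le_one_div_of_le h2 h1
    rw [Real.norm_eq_abs, abs_of_nonneg (by positivity)]
    calc 1 / Real.sqrt ((t+ε)*t) ≤ 1 / Real.sqrt (ε * t) := h3
    _ = (Real.sqrt ε)⁻¹ * t ^ (-(1/2) : ℝ) := by
        rw [Real.sqrt_mul hε.le, Real.rpow_neg ht0.le, ← Real.sqrt_eq_rpow]
        field_simp

private lemma aux_ftc_g {L ε : ℝ} (hL : 0 < L) (hε : 0 < ε) :
    ∫ t in (0:ℝ)..L, 1 / Real.sqrt ((t + ε) * t)
      = 2 * Real.log (Real.sqrt L + Real.sqrt (L + ε)) - Real.log ε := by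
  have key : ∫ t in (0:ℝ)..L, 1 / Real.sqrt ((t + ε) * t)
      = (fun t => 2 * Real.log (Real.sqrt t + Real.sqrt (t + ε))) L
        - (fun t => 2 * Real.log (Real.sqrt t + Real.sqrt (t + ε))) 0 := by
    refine intervalIntegral.integral_eq_sub_of_hasDerivAt_of_le
        (f := fun t => 2 * Real.log (Real.sqrt t + Real.sqrt (t + ε)))
        (f' := fun t => 1 / Real.sqrt ((t + ε) * t)) hL.le ?_ ?_ (aux_int_g hL hε)
    · refine ContinuousOn.mul continuousOn_const (ContinuousOn.log ?_ ?_)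
      · exact (Real.continuous_sqrt.continuousOn.add
          (Real.continuous_sqrt.comp (by continuity)).continuousOn)
      · intro t ht
        have h2 : 0 < Real.sqrt (t + ε) := Real.sqrt_pos.2 (by nlinarith [ht.1])
        have h1 : 0 ≤ Real.sqrt t := Real.sqrt_nonneg t
        positivity
    · intro t ht
      have ht0 : 0 < t := ht.1
      have htε : 0 < t + ε := by linarith
      have ha : 0 < Real.sqrt t := Real.sqrt_pos.2 ht0
      have hb : 0 < Real.sqrt (t + ε) := Real.sqrt_pos.2 htε
      have h1 : HasDerivAt Real.sqrt (1 / (2 * Real.sqrt t)) t := Real.hasDerivAt_sqrt ht0.ne'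
      have h2 : HasDerivAt (fun x => Real.sqrt (x + ε)) (1 / (2 * Real.sqrt (t + ε))) t := by
        have := (Real.hasDerivAt_sqrt htε.ne').comp t ((hasDerivAt_id t).add_const ε)
        simpa [Function.comp_def] using this
      have hsum : HasDerivAt (fun x => Real.sqrt x + Real.sqrt (x + ε))
          (1 / (2 * Real.sqrt t) + 1 / (2 * Real.sqrt (t + ε))) t := h1.add h2
      have hpos : Real.sqrt t + Real.sqrt (t + ε) ≠ 0 := by positivity
      have hlog := (hsum.log hpos).const_mul 2
      convert hlog using 1
      show 1 / Real.sqrt ((t + ε) * t) = _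
      rw [Real.sqrt_mul (by linarith : (0:ℝ) ≤ t + ε)]
      field_simp
      ring
      rfl
  rw [key]
  simp only [Real.sqrt_zero, zero_add]
  rw [Real.log_sqrt hε.le]
  ring

private lemma aux_log_int {L ε : ℝ} (hL : 0 < L) (hε : 0 < ε) :
    ∫ t in (0:ℝ)..L, 1 / (t + ε) = Real.log (L + ε) - Real.log ε := by
  have := intervalIntegral.integral_comp_add_right (a := (0:ℝ)) (b := L)
    (fun x => 1 / x) ε
  rw [this, zero_add, integral_one_div (by
    intro h
    rcases Set.mem_uIcc.1 h with h' | h' <;> nlinarith [h'.1, h'.2])]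
  rw [Real.log_div (by positivity) (by positivity)]

set_option maxHeartbeats 1000000 in
private lemma key_lemma (L : ℝ) (hL : 0 < L) (φ : ℝ → ℝ)
    (hφ : ContDiffOn ℝ 1 φ (Set.Icc 0 L)) :
    (fun ε => (∫ t in (0:ℝ)..L, φ t / Real.sqrt ((t + ε) * t)) -
        (-(φ 0) * Real.log ε + (φ 0 * Real.log (4 * L) +
          ∫ t in (0:ℝ)..L, (φ t - φ 0) / t)))
      =O[𝓝[>] (0:ℝ)] (fun ε => ε * Real.log ε) := by
  -- Lipschitz constant
  have hdiff : DifferentiableOn ℝ φ (Set.Icc 0 L) := hφ.differentiableOn one_ne_zero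
  have hderivcont : ContinuousOn (derivWithin φ (Set.Icc 0 L)) (Set.Icc 0 L) :=
    hφ.continuousOn_derivWithin (uniqueDiffOn_Icc hL) le_rfl
  obtain ⟨C, hC⟩ := isCompact_Icc.exists_bound_of_continuousOn hderivcont
  have hC0 : 0 ≤ C := le_trans (norm_nonneg _) (hC 0 ⟨le_rfl, hL.le⟩)
  have hlip : ∀ t ∈ Set.Icc (0:ℝ) L, |φ t - φ 0| ≤ C * t := by
    intro t ht
    have := (convex_Icc (0:ℝ) L).norm_image_sub_le_of_norm_derivWithin_le hdiff hC
      (Set.left_mem_Icc.2 hL.le) ht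
    rw [Real.norm_eq_abs, Real.norm_eq_abs, sub_zero, abs_of_nonneg ht.1] at this
    exact this
  obtain ⟨M, hM⟩ := isCompact_Icc.exists_bound_of_continuousOn hφ.continuousOn
  -- continuity of φ on Ioc
  have hφc : ContinuousOn φ (Set.Ioc 0 L) := hφ.continuousOn.mono Set.Ioc_subset_Icc_self
  rw [isBigO_iff]
  refine ⟨|φ 0| / (2 * L) + C * Real.log (L + 1) + C, ?_⟩
  have hmem : Set.Ioo (0:ℝ) (min 1 (Real.exp (-1))) ∈ 𝓝[>] (0:ℝ) :=
    Ioo_mem_nhdsGT_of_mem ⟨le_refl 0, lt_min one_pos (Real.exp_pos _)⟩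
  filter_upwards [hmem] with ε hε
  have hε0 : 0 < ε := hε.1
  have hε1 : ε < 1 := lt_of_lt_of_le hε.2 (min_le_left _ _)
  have hεe : ε ≤ Real.exp (-1) := le_trans hε.2.le (min_le_right _ _)
  have hlogε : Real.log ε ≤ -1 := (Real.log_le_iff_le_exp hε0).2 hεe
  -- basic positivity
  have hSpos : ∀ t ∈ Set.Ioc (0:ℝ) L, 0 < Real.sqrt ((t + ε) * t) := fun t ht =>
    Real.sqrt_pos.2 (by nlinarith [ht.1])
  -- integrabilities
  have Ig := aux_int_g hL hε0
  have hφgc : ContinuousOn (fun t => φ t / Real.sqrt ((t + ε) * t)) (Set.Ioc 0 L) := by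
    refine hφc.div ((Real.continuous_sqrt.comp (by continuity)).continuousOn) ?_
    exact fun t ht => (hSpos t ht).ne'
  have Iφg : IntervalIntegrable (fun t => φ t / Real.sqrt ((t + ε) * t)) volume 0 L := by
    refine IntervalIntegrable.mono_fun'
      (g := fun t => M * (1 / Real.sqrt ((t + ε) * t))) (Ig.const_mul _) ?_ ?_
    · rw [Set.uIoc_of_le hL.le]
      exact hφgc.aestronglyMeasurable measurableSet_Ioc
    · rw [Set.uIoc_of_le hL.le, Filter.EventuallyLE, ae_restrict_iff' measurableSet_Ioc]
      refine ae_of_all _ fun t ht => ?_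
      have h1 := hSpos t ht
      have h2 : |φ t| ≤ M := hM t (Set.Ioc_subset_Icc_self ht)
      rw [Real.norm_eq_abs, abs_div, abs_of_nonneg h1.le]
      rw [div_le_iff₀ h1]
      calc |φ t| ≤ M := h2
      _ = M * (1 / Real.sqrt ((t+ε)*t)) * Real.sqrt ((t+ε)*t) := by rw [mul_one_div, div_mul_cancel₀ _ h1.ne']
  have Idiff : IntervalIntegrable (fun t => (φ t - φ 0) / Real.sqrt ((t + ε) * t))
      volume 0 L := by
    have h := Iφg.sub (Ig.const_mul (φ 0))
    have hfun : (fun t => (φ t - φ 0) / Real.sqrt ((t + ε) * t))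
        = fun x => φ x / Real.sqrt ((x + ε) * x) - φ 0 * (1 / Real.sqrt ((x + ε) * x)) := by
      funext t; ring
    rw [hfun]; exact h
  have Iq : IntervalIntegrable (fun t => (φ t - φ 0) / t) volume 0 L := by
    refine IntervalIntegrable.mono_fun' (g := fun _ => C) intervalIntegrable_const ?_ ?_
    · rw [Set.uIoc_of_le hL.le]
      refine ((hφc.sub continuousOn_const).div continuousOn_id ?_).aestronglyMeasurable
        measurableSet_Ioc
      exact fun t ht => ht.1.ne'
    · rw [Set.uIoc_of_le hL.le, Filter.EventuallyLE, ae_restrict_iff' measurableSet_Ioc]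
      refine ae_of_all _ fun t ht => ?_
      rw [Real.norm_eq_abs, abs_div, abs_of_pos ht.1, div_le_iff₀ ht.1]
      exact hlip t (Set.Ioc_subset_Icc_self ht)
  have hsplit : (∫ t in (0:ℝ)..L, φ t / Real.sqrt ((t + ε) * t))
      = φ 0 * (∫ t in (0:ℝ)..L, 1 / Real.sqrt ((t + ε) * t))
        + ∫ t in (0:ℝ)..L, (φ t - φ 0) / Real.sqrt ((t + ε) * t) := by
    rw [← intervalIntegral.integral_const_mul,
      ← intervalIntegral.integral_add (Ig.const_mul _) Idiff]
    refine intervalIntegral.integral_congr fun t _ => ?_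
    ring
  have hdiff2 : (∫ t in (0:ℝ)..L, (φ t - φ 0) / Real.sqrt ((t + ε) * t))
      - (∫ t in (0:ℝ)..L, (φ t - φ 0) / t)
      = ∫ t in (0:ℝ)..L, ((φ t - φ 0) / Real.sqrt ((t + ε) * t) - (φ t - φ 0) / t) :=
    (intervalIntegral.integral_sub Idiff Iq).symm
  have hIbound : IntervalIntegrable (fun t => C * ε * (1 / (t + ε))) volume 0 L := by
    apply ContinuousOn.intervalIntegrable
    refine ContinuousOn.mul continuousOn_const (continuousOn_const.div ((continuous_id.add continuous_const).continuousOn) ?_)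
    rintro t ht
    rw [Set.uIcc_of_le hL.le] at ht
    have := ht.1; positivity
  have hIboundval : ∫ t in (0:ℝ)..L, C * ε * (1 / (t + ε))
      = C * ε * (Real.log (L + ε) - Real.log ε) := by
    rw [intervalIntegral.integral_const_mul, aux_log_int hL hε0]
  -- pointwise bound for the correction term
  have hptwise : ∀ t ∈ Set.Ioc (0:ℝ) L,
      ‖(φ t - φ 0) / Real.sqrt ((t + ε) * t) - (φ t - φ 0) / t‖
        ≤ C * ε * (1 / (t + ε)) := by
    intro t ht
    have ht0 : 0 < t := ht.1
    set a := Real.sqrt t with hadef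
    set b := Real.sqrt (t + ε) with hbdef
    have ha : 0 < a := Real.sqrt_pos.2 ht0
    have hb : 0 < b := Real.sqrt_pos.2 (by linarith)
    have hab : a ≤ b := Real.sqrt_le_sqrt (by linarith)
    have ha2 : a ^ 2 = t := Real.sq_sqrt ht0.le
    have hb2 : b ^ 2 = t + ε := Real.sq_sqrt (by linarith)
    have hS : Real.sqrt ((t + ε) * t) = b * a := Real.sqrt_mul (by linarith) t
    rw [hS, Real.norm_eq_abs]
    have h5 : (φ t - φ 0) / (b * a) - (φ t - φ 0) / t
        = (φ t - φ 0) * (1 / (b * a) - 1 / t) := by ring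
    have htba : t ≤ b * a := by
      have h := mul_le_mul_of_nonneg_right hab ha.le
      calc t = a * a := by rw [← ha2]; ring
      _ ≤ b * a := h
    have h6 : |1 / (b * a) - 1 / t| = 1 / t - 1 / (b * a) := by
      rw [abs_sub_comm]
      exact abs_of_nonneg (sub_nonneg.2 (one_div_le_one_div_of_le ht0 htba))
    rw [h5, abs_mul, h6]
    have hstep1 : |φ t - φ 0| * (1 / t - 1 / (b * a))
        ≤ (C * t) * (1 / t - 1 / (b * a)) := by
      refine mul_le_mul_of_nonneg_right (hlip t (Set.Ioc_subset_Icc_self ht)) ?_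
      exact sub_nonneg.2 (one_div_le_one_div_of_le ht0 htba)
    refine hstep1.trans ?_
    have e1 : t * (1 / t - 1 / (b * a)) = 1 - a / b := by
      rw [mul_sub, mul_one_div, div_self ht0.ne', mul_one_div, ← ha2]
      congr 1
      rw [pow_two, mul_comm b a, mul_div_mul_left _ _ ha.ne']
    have e2 : ε * (1 / (t + ε)) = 1 - a ^ 2 / b ^ 2 := by
      rw [mul_one_div, ← hb2, show ε = b ^ 2 - a ^ 2 by rw [ha2, hb2]; ring,
        sub_div, div_self (by positivity : (b:ℝ) ^ 2 ≠ 0)]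
    have e3 : a ^ 2 / b ^ 2 ≤ a / b := by
      have hr : a / b ≤ 1 := (div_le_one hb).2 hab
      have hr0 : 0 ≤ a / b := by positivity
      rw [← div_pow]
      nlinarith
    calc C * t * (1 / t - 1 / (b * a)) = C * (t * (1 / t - 1 / (b * a))) := by ring
    _ = C * (1 - a / b) := by rw [e1]
    _ ≤ C * (1 - a ^ 2 / b ^ 2) := by nlinarith
    _ = C * (ε * (1 / (t + ε))) := by rw [e2]
    _ = C * ε * (1 / (t + ε)) := by ring
  have hcorr : ‖∫ t in (0:ℝ)..L, ((φ t - φ 0) / Real.sqrt ((t + ε) * t) - (φ t - φ 0) / t)‖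
      ≤ C * ε * (Real.log (L + ε) - Real.log ε) := by
    have hb := intervalIntegral.norm_integral_le_of_norm_le (μ := volume) (a := (0:ℝ)) (b := L)
      (f := fun t => (φ t - φ 0) / Real.sqrt ((t + ε) * t) - (φ t - φ 0) / t)
      (g := fun t => C * ε * (1 / (t + ε))) hL.le ?_ hIbound
    · refine hb.trans ?_
      refine (le_of_eq hIboundval).trans ?_
      have : Real.log ε ≤ Real.log (L + ε) :=
        Real.log_le_log hε0 (by linarith)
      have h2 : 0 ≤ C * ε := by positivity
      nlinarith
    · exact ae_of_all _ hptwise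
  -- bound for the boundary log term
  have hlog4 : Real.log (4 * L) = 2 * Real.log (2 * Real.sqrt L) := by
    rw [show (4:ℝ) * L = (2 * Real.sqrt L) ^ 2 by
      rw [mul_pow, Real.sq_sqrt hL.le]; norm_num]
    rw [Real.log_pow]; push_cast; ring
  have hterm1 : |2 * Real.log (Real.sqrt L + Real.sqrt (L + ε)) - Real.log (4 * L)|
      ≤ ε / (2 * L) := by
    rw [hlog4]
    set u := Real.sqrt L with hudef
    set v := Real.sqrt (L + ε) with hvdef
    have hu : 0 < u := Real.sqrt_pos.2 hL
    have huv : u ≤ v := Real.sqrt_le_sqrt (by linarith)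
    have hu2 : u ^ 2 = L := Real.sq_sqrt hL.le
    have hvb : v ≤ u + ε / (2 * u) := by
      set w := ε / (2 * u) with hwdef
      have hw : 2 * u * w = ε := by rw [hwdef]; field_simp
      have h9 : L + ε ≤ (u + w) ^ 2 := by nlinarith [sq_nonneg w]
      calc v ≤ Real.sqrt ((u + w) ^ 2) := Real.sqrt_le_sqrt h9
      _ = u + w := Real.sqrt_sq (by positivity)
    have hr1 : 1 ≤ (u + v) / (2 * u) := by
      rw [le_div_iff₀ (by positivity)]; linarith
    have hr2 : (u + v) / (2 * u) - 1 ≤ ε / (4 * L) := by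
      rw [div_sub_one (by positivity : (2:ℝ) * u ≠ 0), div_le_div_iff₀ (by positivity)
        (by positivity)]
      have hwu : (u + v - 2 * u) * (2 * u) ≤ (ε / (2 * u)) * (2 * u) := by
        nlinarith
      have : (ε / (2 * u)) * (2 * u) = ε := by field_simp
      nlinarith [this, hwu, hu2]
    have e : 2 * Real.log (u + v) - 2 * Real.log (2 * u)
        = 2 * Real.log ((u + v) / (2 * u)) := by
      rw [Real.log_div (by positivity) (by positivity)]; ring
    rw [e]
    have hlogr0 : 0 ≤ Real.log ((u + v) / (2 * u)) := Real.log_nonneg hr1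
    rw [abs_of_nonneg (by positivity)]
    have hls := Real.log_le_sub_one_of_pos (by positivity : 0 < (u + v) / (2 * u))
    have hhalf : ε / (2 * L) = 2 * (ε / (4 * L)) := by ring
    linarith
  -- assemble
  have hR : (∫ t in (0:ℝ)..L, φ t / Real.sqrt ((t + ε) * t)) -
        (-(φ 0) * Real.log ε + (φ 0 * Real.log (4 * L)
          + ∫ t in (0:ℝ)..L, (φ t - φ 0) / t))
      = φ 0 * (2 * Real.log (Real.sqrt L + Real.sqrt (L + ε)) - Real.log (4 * L))
        + ∫ t in (0:ℝ)..L, ((φ t - φ 0) / Real.sqrt ((t + ε) * t) - (φ t - φ 0) / t) := by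
    rw [hsplit, aux_ftc_g hL hε0, ← hdiff2]; ring
  rw [hR]
  have h1 : ‖φ 0 * (2 * Real.log (Real.sqrt L + Real.sqrt (L + ε)) - Real.log (4 * L))
        + ∫ t in (0:ℝ)..L, ((φ t - φ 0) / Real.sqrt ((t + ε) * t) - (φ t - φ 0) / t)‖
      ≤ |φ 0| * (ε / (2 * L)) + C * ε * (Real.log (L + ε) - Real.log ε) := by
    refine (norm_add_le _ _).trans (add_le_add ?_ hcorr)
    rw [Real.norm_eq_abs, abs_mul]
    exact mul_le_mul_of_nonneg_left hterm1 (abs_nonneg _)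
  refine h1.trans ?_
  have hnorm : ‖ε * Real.log ε‖ = ε * (-Real.log ε) := by
    rw [Real.norm_eq_abs, abs_mul, abs_of_pos hε0,
      abs_of_neg (lt_of_le_of_lt hlogε (by norm_num))]
  rw [hnorm]
  have hml : 1 ≤ -Real.log ε := by linarith
  have hlogL : Real.log (L + ε) ≤ Real.log (L + 1) := Real.log_le_log (by positivity)
    (by linarith)
  have hlogL0 : 0 ≤ Real.log (L + 1) := Real.log_nonneg (by linarith)
  have hA : |φ 0| * (ε / (2 * L)) ≤ |φ 0| / (2 * L) * (ε * -Real.log ε) := by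
    rw [show |φ 0| * (ε / (2 * L)) = |φ 0| / (2 * L) * ε by ring]
    exact mul_le_mul_of_nonneg_left (le_mul_of_one_le_right hε0.le hml)
      (by positivity)
  have hB : C * ε * (Real.log (L + ε) - Real.log ε)
      ≤ (C * Real.log (L + 1) + C) * (ε * -Real.log ε) := by
    have hB1 : C * ε * Real.log (L + ε) ≤ C * Real.log (L + 1) * (ε * -Real.log ε) := by
      calc C * ε * Real.log (L + ε) ≤ C * ε * Real.log (L + 1) := by
            exact mul_le_mul_of_nonneg_left hlogL (by positivity)
      _ = C * Real.log (L + 1) * ε := by ring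
      _ ≤ C * Real.log (L + 1) * (ε * -Real.log ε) :=
          mul_le_mul_of_nonneg_left (le_mul_of_one_le_right hε0.le hml) (by positivity)
    have hB2 : C * ε * (-Real.log ε) ≤ C * (ε * -Real.log ε) := by rw [mul_assoc]
    nlinarith [hB1, hB2]
  linarith [hA, hB]

/-- Lemma A.4 (first estimate): for `f ∈ C¹([α,β])`, as `ε → 0⁺`,
`∫_α^β f(s)/√((s+ε-α)(s-α)) ds = -f(α) log ε + η + O(ε log ε)`, where
`η = f(α) log(4(β-α)) + ∫_α^β (f(s) - f(α))/(s-α) ds`. -/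
theorem stmt_5 (α β : ℝ) (hαβ : α < β) (f : ℝ → ℝ)
    (hf : ContDiffOn ℝ 1 f (Set.Icc α β))
    (η : ℝ) (hη : η = f α * Real.log (4 * (β - α)) +
        ∫ s in α..β, (f s - f α) / (s - α)) :
    (fun ε => (∫ s in α..β, f s / Real.sqrt ((s + ε - α) * (s - α))) -
        (-(f α) * Real.log ε + η))
      =O[𝓝[>] (0:ℝ)] (fun ε => ε * Real.log ε) := by
  subst hη
  have hL : 0 < β - α := sub_pos.2 hαβ
  set φ : ℝ → ℝ := fun t => f (t + α) with hφdef
  have hφ : ContDiffOn ℝ 1 φ (Set.Icc 0 (β - α)) := by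
    refine hf.comp ((contDiff_id.add contDiff_const).contDiffOn) ?_
    intro t ht
    simp only [Set.mem_Icc] at ht ⊢
    constructor <;> show _ ≤ _ <;> [show α ≤ t + α; show t + α ≤ β] <;> [linarith [ht.1]; linarith [ht.2]]
  have hφ0 : φ 0 = f α := by simp [hφdef]
  have h1 : ∀ ε : ℝ, (∫ s in α..β, f s / Real.sqrt ((s + ε - α) * (s - α)))
      = ∫ t in (0:ℝ)..(β - α), φ t / Real.sqrt ((t + ε) * t) := by
    intro ε
    have := intervalIntegral.integral_comp_sub_right (a := α) (b := β)
      (fun t => φ t / Real.sqrt ((t + ε) * t)) α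
    rw [sub_self] at this
    rw [← this]
    refine intervalIntegral.integral_congr fun s _ => ?_
    simp only [hφdef, sub_add_cancel]
    ring_nf
  have h2 : (∫ s in α..β, (f s - f α) / (s - α))
      = ∫ t in (0:ℝ)..(β - α), (φ t - φ 0) / t := by
    have := intervalIntegral.integral_comp_sub_right (a := α) (b := β)
      (fun t => (φ t - φ 0) / t) α
    rw [sub_self] at this
    rw [← this]
    refine intervalIntegral.integral_congr fun s _ => ?_
    simp only [hφdef, sub_add_cancel, zero_add]
  have hfun : (fun ε => (∫ s in α..β, f s / Real.sqrt ((s + ε - α) * (s - α))) -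
        (-(f α) * Real.log ε + (f α * Real.log (4 * (β - α)) +
          ∫ s in α..β, (f s - f α) / (s - α))))
      = fun ε => (∫ t in (0:ℝ)..(β - α), φ t / Real.sqrt ((t + ε) * t)) -
        (-(φ 0) * Real.log ε + (φ 0 * Real.log (4 * (β - α)) +
          ∫ t in (0:ℝ)..(β - α), (φ t - φ 0) / t)) := by
    funext ε
    rw [h1 ε, h2, hφ0]
  rw [hfun]
  exact key_lemma (β - α) hL φ hφ
end

section
/- With κ(σ) defined as the minimum period compatible with the parity constraints E_σ (as in the lower-bound theorem), and ς = (…,0,1,0,1,0) ∈ {0,1}ⁿ the alternating vector ending in 0, one has κ(ς) = n+2. Moreover κ(σ) = n+2 implies σ = ς. -/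
/-- The index set `E_σ ⊆ {0,…,n}` for `σ ∈ {0,1}ⁿ` (0-based: `σ i` is the paper's
`σ_{i+1}`): `0 ∈ E_σ ↔ σ₁ = 1`; for `1 ≤ j ≤ n-1`, `j ∈ E_σ ↔ (σ_j,σ_{j+1}) ≠ (1,0)`;
and `n ∈ E_σ`. -/
def sigmaE (n : ℕ) (σ : ℕ → Bool) : Set ℕ :=
  {j | j = n ∨ (j = 0 ∧ σ 0 = true) ∨
    (0 < j ∧ j < n ∧ ¬(σ (j - 1) = true ∧ σ j = false))}

/-- `κ(σ)`: the minimal `m₀` over integer sequences `2 ≤ m_n < ⋯ < m₁ < m₀`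
such that `m_j` is even for every `j ∈ E_σ`. -/
noncomputable def kappa (n : ℕ) (σ : ℕ → Bool) : ℕ :=
  sInf {m₀ | ∃ m : ℕ → ℕ, m 0 = m₀ ∧ 2 ≤ m n ∧ (∀ j < n, m (j + 1) < m j) ∧
    ∀ j ∈ sigmaE n σ, Even (m j)}

private lemma mono_key (n : ℕ) (m : ℕ → ℕ) (hdec : ∀ j < n, m (j + 1) < m j) :
    ∀ d a, a + d ≤ n → m (a + d) + d ≤ m a := by
  intro d
  induction d with
  | zero => intro a _; simp
  | succ d ih =>
    intro a h
    have h1 : m (a + d + 1) < m (a + d) := hdec _ (by omega)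
    have h2 := ih a (by omega)
    have he : a + (d + 1) = a + d + 1 := by omega
    rw [he]
    omega

/-- The alternating vector `ς = (…,0,1,0,1,0)` (1-based: `ς_j = 1` iff `n - j` is
odd) satisfies `κ(ς) = n+2`, and it is the only `σ ∈ {0,1}ⁿ` with `κ(σ) = n+2`. -/
theorem stmt_13 (n : ℕ) (hn : 1 ≤ n) :
    kappa n (fun i => decide ((n - (i + 1)) % 2 = 1)) = n + 2 ∧
    ∀ σ : ℕ → Bool, kappa n σ = n + 2 →
      ∀ i < n, σ i = decide ((n - (i + 1)) % 2 = 1) := by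
  have hne : ∀ σ : ℕ → Bool,
      {m₀ | ∃ m : ℕ → ℕ, m 0 = m₀ ∧ 2 ≤ m n ∧ (∀ j < n, m (j + 1) < m j) ∧
        ∀ j ∈ sigmaE n σ, Even (m j)}.Nonempty := by
    intro σ
    refine ⟨2 * (n + 2), fun j => 2 * (n + 2 - j), rfl, ?_, fun j hj => ?_, ?_⟩
    · show 2 ≤ 2 * (n + 2 - n); omega
    · show 2 * (n + 2 - (j + 1)) < 2 * (n + 2 - j); omega
    · intro j _
      exact ⟨n + 2 - j, by ring⟩
  have hlb : ∀ σ : ℕ → Bool, n + 2 ≤ kappa n σ := by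
    intro σ
    apply le_csInf (hne σ)
    rintro m₀ ⟨m, h0, h2, hdec, -⟩
    have := mono_key n m hdec n 0 (by omega)
    simp only [Nat.zero_add] at this
    omega
  constructor
  · apply le_antisymm _ (hlb _)
    unfold kappa
    apply Nat.sInf_le
    simp only [Set.mem_setOf_eq]
    refine ⟨fun j => n + 2 - j, rfl, ?_, fun j hj => ?_, ?_⟩
    · show 2 ≤ n + 2 - n; omega
    · show n + 2 - (j + 1) < n + 2 - j; omega
    intro j hj
    show Even (n + 2 - j)
    rw [Nat.even_iff]
    simp only [sigmaE, Set.mem_setOf_eq] at hj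
    rcases hj with h | ⟨h0, hσ⟩ | ⟨h1, h2, h3⟩
    · omega
    · simp only [decide_eq_true_iff] at hσ
      omega
    · simp only [decide_eq_true_iff, decide_eq_false_iff_not, not_and, not_not] at h3
      omega
  · intro σ hκ i hi
    have hmem := Nat.sInf_mem (hne σ)
    unfold kappa at hκ
    rw [hκ] at hmem
    clear hκ
    obtain ⟨m, h0, h2, hdec, heven⟩ := hmem
    have hval : ∀ j ≤ n, m j + j = n + 2 := by
      intro j hj
      have a := mono_key n m hdec j 0 (by omega)
      have b := mono_key n m hdec (n - j) j (by omega)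
      simp only [Nat.zero_add] at a
      rw [show j + (n - j) = n from by omega] at b
      omega
    have hpar : ∀ j, j ∈ sigmaE n σ → j ≤ n → (n - j) % 2 = 0 := by
      intro j hj hjn
      have he := heven j hj
      rw [Nat.even_iff] at he
      have := hval j hjn
      omega
    rcases eq_or_ne ((n - i) % 2) 0 with hp | hp
    · -- want σ i = true
      have h1 : i + 1 < n := by omega
      have key : σ i = true ∧ σ (i + 1) = false := by
        by_contra hc
        have hm : (i + 1) ∈ sigmaE n σ := by
          simp only [sigmaE, Set.mem_setOf_eq]
          exact Or.inr (Or.inr ⟨by omega, h1, by simpa using hc⟩)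
        have := hpar (i + 1) hm (by omega)
        omega
      have hr : (n - (i + 1)) % 2 = 1 := by omega
      simp [key.1, hr]
    · -- (n - i) % 2 = 1, want σ i = false
      have hr : (n - (i + 1)) % 2 = 0 := by omega
      rcases Nat.eq_zero_or_pos i with h0' | h0'
      · subst h0'
        cases hb : σ 0 with
        | false => simp [hb, hr]
        | true =>
          have hm : (0 : ℕ) ∈ sigmaE n σ := by
            simp [sigmaE, hb]
          have := hpar 0 hm (by omega)
          omega
      · cases hb : σ i with
        | false => simp [hb, hr]
        | true =>
          have hm : i ∈ sigmaE n σ := by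
            simp only [sigmaE, Set.mem_setOf_eq]
            exact Or.inr (Or.inr ⟨h0', hi, by simp [hb]⟩)
          have := hpar i hm (by omega)
          omega
end

section
/- With κ(σ) as in the lower-bound theorem, the average of κ over all σ ∈ {0,1}ⁿ equals 3n/2 + 2, i.e. 2^{-n} Σ_{σ ∈ {0,1}ⁿ} κ(σ) = 3n/2 + 2. -/
/-- next even-forcing step -/
def estep (v : ℕ) : ℕ := if Even v then v + 2 else v + 1

lemma even_estep (v : ℕ) : Even (estep v) := by
  by_cases h : Even v <;> simp [estep, h, Nat.even_add_one] <;> simpa [Nat.even_add_one] using h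

lemma lt_estep (v : ℕ) : v + 1 ≤ estep v := by
  by_cases h : Even v <;> simp [estep, h] <;> omega

/-- boolean membership in `sigmaE` for indices `< n` -/
def inE (σ : ℕ → Bool) (j : ℕ) : Bool :=
  (decide (j = 0) && σ 0) || (decide (0 < j) && !(σ (j - 1) && !(σ j)))

lemma mem_sigmaE_iff {n : ℕ} {σ : ℕ → Bool} {j : ℕ} (hj : j < n) :
    j ∈ sigmaE n σ ↔ inE σ j = true := by
  simp only [sigmaE, Set.mem_setOf_eq, inE, Bool.or_eq_true, Bool.and_eq_true,
    decide_eq_true_eq, Bool.not_eq_true', Bool.not_eq_true]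
  constructor
  · rintro (rfl | ⟨rfl, h⟩ | ⟨h1, h2, h3⟩)
    · omega
    · exact Or.inl ⟨rfl, h⟩
    · right
      refine ⟨h1, ?_⟩
      cases hσ1 : σ (j - 1) <;> cases hσ2 : σ j <;> simp_all
  · rintro (⟨rfl, h⟩ | ⟨h1, h2⟩)
    · exact Or.inr (Or.inl ⟨rfl, h⟩)
    · refine Or.inr (Or.inr ⟨h1, hj, ?_⟩)
      cases hσ1 : σ (j - 1) <;> cases hσ2 : σ j <;> simp_all

/-- greedy values: `hval n σ v i` is the minimal possible `m_{n-i}` given `m_n = v`. -/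
def hval (n : ℕ) (σ : ℕ → Bool) (v : ℕ) : ℕ → ℕ
  | 0 => v
  | i + 1 => if inE σ (n - (i + 1)) then estep (hval n σ v i) else hval n σ v i + 1

lemma hval_lt (n : ℕ) (σ : ℕ → Bool) (v i : ℕ) :
    hval n σ v i < hval n σ v (i + 1) := by
  by_cases h : inE σ (n - (i + 1)) = true <;>
    simp [hval, h]
  · have := lt_estep (hval n σ v i); omega

lemma kappa_eq (n : ℕ) (σ : ℕ → Bool) (hn : 1 ≤ n) :
    kappa n σ = hval n σ 2 n := by
  have hmem : hval n σ 2 n ∈ {m₀ | ∃ m : ℕ → ℕ, m 0 = m₀ ∧ 2 ≤ m n ∧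
      (∀ j < n, m (j + 1) < m j) ∧ ∀ j ∈ sigmaE n σ, Even (m j)} := by
    refine ⟨fun j => hval n σ 2 (n - j), by simp, by simp [hval], ?_, ?_⟩
    · intro j hj
      show hval n σ 2 (n - (j + 1)) < hval n σ 2 (n - j)
      rw [show n - j = (n - (j + 1)) + 1 from by omega]
      exact hval_lt n σ 2 (n - (j + 1))
    · intro j hj
      have hle : j ≤ n := by
        rcases hj with h | ⟨h, _⟩ | ⟨_, h, _⟩ <;> omega
      show Even (hval n σ 2 (n - j))
      rcases eq_or_lt_of_le hle with rfl | hlt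
      · simpa [hval] using (by decide : Even 2)
      · have h1 : n - j = (n - j - 1) + 1 := by omega
        have h2 : n - ((n - j - 1) + 1) = j := by omega
        rw [h1, hval, h2, if_pos ((mem_sigmaE_iff hlt).mp hj)]
        exact even_estep _
  have hlb : ∀ m : ℕ → ℕ, 2 ≤ m n → (∀ j < n, m (j + 1) < m j) →
      (∀ j ∈ sigmaE n σ, Even (m j)) → ∀ i, i ≤ n → hval n σ 2 i ≤ m (n - i) := by
    intro m h2 hlt hev
    intro i
    induction i with
    | zero => intro _; simpa [hval] using h2
    | succ i ih =>
      intro hi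
      have ihh := ih (by omega)
      have hjn : n - (i + 1) < n := by omega
      have hstep := hlt (n - (i + 1)) hjn
      have hni : n - (i + 1) + 1 = n - i := by omega
      rw [hni] at hstep
      by_cases hE : inE σ (n - (i + 1)) = true
      · have heven : Even (m (n - (i + 1))) :=
          hev _ ((mem_sigmaE_iff hjn).mpr hE)
        rw [hval, if_pos hE]
        by_cases hv : Even (hval n σ 2 i)
        · rw [estep, if_pos hv]
          rcases heven with ⟨a, ha⟩
          rcases hv with ⟨b, hb⟩
          omega
        · rw [estep, if_neg hv]
          omega
      · rw [hval, if_neg hE]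
        omega
  apply le_antisymm
  · exact Nat.sInf_le hmem
  · refine le_csInf ⟨_, hmem⟩ ?_
    rintro x ⟨m, rfl, h2, hlt, hev⟩
    have := hlb m h2 hlt hev n le_rfl
    simpa using this

/-- step combining: `b` is the current upper bit `σ_j`, `a` the lower bit `σ_{j-1}`. -/
def bstep (v : ℕ) (b a : Bool) : ℕ := if a && !b then v + 1 else estep v

/-- `go v b L` processes steps for indices `|L|, |L|-1, …, 1, 0` where `b = σ_{|L|}`
and `L = [σ_{|L|-1}, …, σ_0]`. -/
def go (v : ℕ) (b : Bool) : List Bool → ℕ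
  | [] => if b then estep v else v + 1
  | a :: L => go (bstep v b a) a L

lemma hval_shift (k : ℕ) (σ : ℕ → Bool) (v : ℕ) :
    ∀ i, i ≤ k + 1 →
      hval (k + 2) σ v (i + 1) = hval (k + 1) σ (bstep v (σ (k + 1)) (σ k)) i := by
  intro i
  induction i with
  | zero =>
    intro _
    have h1 : k + 2 - (0 + 1) = k + 1 := by omega
    simp only [hval, h1, bstep, inE]
    have : ¬(k + 1 = 0) := by omega
    simp [this]
    by_cases h : σ k = true ∧ σ (k+1) = false
    · simp [h.1, h.2]
    · cases hσ1 : σ k <;> cases hσ2 : σ (k + 1) <;> simp_all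
  | succ i ih =>
    intro hi
    have ihh := ih (by omega)
    have h1 : k + 2 - (i + 1 + 1) = k + 1 - (i + 1) := by omega
    rw [hval, h1, ihh, hval]

lemma hval_eq_go (k : ℕ) (σ : ℕ → Bool) (v : ℕ) :
    hval (k + 1) σ v (k + 1) = go v (σ k) (List.ofFn fun i : Fin k => σ (k - 1 - (i : ℕ))) := by
  induction k generalizing σ v with
  | zero =>
    simp only [List.ofFn_zero, go, hval, inE]
    cases h : σ 0 <;> simp [h]
  | succ k ih =>
    have h1 : (List.ofFn fun i : Fin (k + 1) => σ (k + 1 - 1 - (i : ℕ)))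
        = σ k :: List.ofFn fun i : Fin k => σ (k - 1 - (i : ℕ)) := by
      rw [List.ofFn_succ]
      refine congrArg₂ List.cons (by norm_num) ?_
      exact congrArg List.ofFn (funext fun i => by simp only [Fin.val_succ]; congr 1; omega)
    rw [h1, go, hval_shift k σ v (k + 1) le_rfl, ih]

lemma sum_go (k : ℕ) : ∀ (v : ℕ) (b : Bool),
    2 * (∑ τ : Fin k → Bool, go v b (List.ofFn τ)) =
      2 ^ (k + 1) * v + 2 ^ k * (if Even v ∧ b = true then 3 * k + 4 else 3 * k + 2) := by
  induction k with
  | zero =>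
    intro v b
    rw [Fintype.sum_unique]
    by_cases hv : Even v <;> cases b <;> simp [go, estep, hv] <;> omega
  | succ k ih =>
    intro v b
    have hre : ∀ τ : Fin (k + 1) → Bool,
        go v b (List.ofFn τ) = go (bstep v b (τ 0)) (τ 0) (List.ofFn (Fin.tail τ)) := by
      intro τ
      rw [List.ofFn_succ, go]
      rfl
    calc 2 * (∑ τ : Fin (k + 1) → Bool, go v b (List.ofFn τ))
        = 2 * (∑ p : Bool × (Fin k → Bool), go (bstep v b p.1) p.1 (List.ofFn p.2)) := by
          rw [← Fintype.sum_equiv (Fin.consEquiv (fun _ => Bool))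
            (fun p => go (bstep v b p.1) p.1 (List.ofFn p.2))
            (fun τ => go v b (List.ofFn τ)) ?_]
          rintro ⟨a, τ⟩
          show go (bstep v b a) a (List.ofFn τ) = go v b (List.ofFn (Fin.cons a τ))
          rw [hre]
          simp [Fin.tail_cons]
      _ = 2 * (∑ τ : Fin k → Bool, go (bstep v b true) true (List.ofFn τ))
          + 2 * (∑ τ : Fin k → Bool, go (bstep v b false) false (List.ofFn τ)) := by
          rw [Fintype.sum_prod_type, Fintype.sum_bool]
          ring
      _ = 2 ^ (k + 1 + 1) * v
          + 2 ^ (k + 1) * (if Even v ∧ b = true then 3 * (k + 1) + 4 else 3 * (k + 1) + 2) := by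
          rw [ih, ih]
          by_cases hv : Even v <;> cases b <;>
            simp [bstep, estep, hv, Nat.even_add_one] <;> ring_nf <;> omega

lemma sum_kappa (k : ℕ) :
    2 * (∑ σ : Fin (k + 1) → Bool,
        kappa (k + 1) (fun i => if h : i < k + 1 then σ ⟨i, h⟩ else false)) =
      2 ^ k * (6 * k + 14) := by
  have hsummand : ∀ σ : Fin (k + 1) → Bool,
      kappa (k + 1) (fun i => if h : i < k + 1 then σ ⟨i, h⟩ else false) =
        go 2 (σ ⟨k, by omega⟩)
          (List.ofFn fun i : Fin k => σ ⟨k - 1 - (i : ℕ), by omega⟩) := by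
    intro σ
    rw [kappa_eq _ _ (by omega), hval_eq_go]
    congr 1
    · rw [dif_pos (show k < k + 1 by omega)]
    · exact congrArg List.ofFn (funext fun i => by
        rw [dif_pos (show k - 1 - (i : ℕ) < k + 1 by omega)])
  rw [Finset.sum_congr rfl fun σ _ => hsummand σ]
  have hbij : Function.Bijective (fun σ : Fin (k + 1) → Bool => σ ∘ Fin.rev) := by
    constructor
    · intro a b h
      funext j
      have := congrFun h (Fin.rev j)
      simpa [Fin.rev_rev] using this
    · intro σ
      exact ⟨σ ∘ Fin.rev, by funext j; simp [Fin.rev_rev]⟩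
  rw [← Fintype.sum_bijective _ hbij
    (fun σ : Fin (k + 1) → Bool => go 2 (σ 0) (List.ofFn fun i : Fin k => σ i.succ))
    _ ?_]
  swap
  · intro σ
    show go 2 (σ 0) _ = go 2 ((σ ∘ Fin.rev) ⟨k, by omega⟩) _
    have e1 : Fin.rev (⟨k, by omega⟩ : Fin (k + 1)) = 0 := by
      apply Fin.ext; simp [Fin.val_rev]
    have e2 : ∀ i : Fin k,
        Fin.rev (⟨k - 1 - (i : ℕ), by omega⟩ : Fin (k + 1)) = i.succ := by
      intro i
      apply Fin.ext
      simp [Fin.val_rev]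
      omega
    simp only [Function.comp_apply, e1]
    congr 1
    exact congrArg List.ofFn (funext fun i => congrArg σ (e2 i).symm)
  rw [← Fintype.sum_equiv (Fin.consEquiv (fun _ => Bool))
    (fun p : Bool × (Fin k → Bool) => go 2 p.1 (List.ofFn p.2))
    (fun σ : Fin (k + 1) → Bool => go 2 (σ 0) (List.ofFn fun i : Fin k => σ i.succ)) ?_]
  swap
  · rintro ⟨a, τ⟩
    have hc : (Fin.consEquiv fun _ : Fin (k + 1) => Bool) (a, τ) = Fin.cons a τ := rfl
    simp only [hc, Fin.cons_zero, Fin.cons_succ]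
  rw [Fintype.sum_prod_type, Fintype.sum_bool]
  show 2 * ((∑ τ : Fin k → Bool, go 2 true (List.ofFn τ)) +
      ∑ τ : Fin k → Bool, go 2 false (List.ofFn τ)) = 2 ^ k * (6 * k + 14)
  have h1 := sum_go k 2 true
  have h2 := sum_go k 2 false
  rw [if_pos ⟨by decide, rfl⟩] at h1
  rw [if_neg (by simp)] at h2
  ring_nf at h1 h2 ⊢
  omega

/-- The average of `κ` over all `σ ∈ {0,1}ⁿ` equals `3n/2 + 2`. -/
theorem stmt_15 (n : ℕ) (hn : 1 ≤ n) :
    (∑ σ : Fin n → Bool,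
        (kappa n (fun i => if h : i < n then σ ⟨i, h⟩ else false) : ℚ)) / 2 ^ n =
      3 * (n : ℚ) / 2 + 2 := by
  obtain ⟨k, rfl⟩ : ∃ k, n = k + 1 := ⟨n - 1, by omega⟩
  have hN := sum_kappa k
  set N : ℕ := ∑ σ : Fin (k + 1) → Bool,
      kappa (k + 1) (fun i => if h : i < k + 1 then σ ⟨i, h⟩ else false) with hNdef
  have hcast : (∑ σ : Fin (k + 1) → Bool,
      (kappa (k + 1) (fun i => if h : i < k + 1 then σ ⟨i, h⟩ else false) : ℚ)) = (N : ℚ) := by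
    rw [hNdef]; push_cast; rfl
  rw [hcast]
  have hQ : (2 : ℚ) * N = 2 ^ k * (6 * k + 14) := by exact_mod_cast hN
  have hNval : (N : ℚ) = 2 ^ k * (3 * k + 7) := by ring_nf at hQ ⊢; linarith
  rw [hNval, pow_succ]
  have h2 : (2 : ℚ) ^ k ≠ 0 := by positivity
  field_simp
  push_cast
  ring
end

section
/- With κ(σ) as in the lower-bound theorem, κ : {0,1}ⁿ → {n+2, …, 2n+2} is surjective. -/
/-- `κ : {0,1}ⁿ → {n+2,…,2n+2}` is surjective. -/
theorem stmt_16 (n : ℕ) (hn : 1 ≤ n) :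
    ∀ k : ℕ, n + 2 ≤ k → k ≤ 2 * n + 2 → ∃ σ : ℕ → Bool, kappa n σ = k := by
  intro k hk1 hk2
  obtain ⟨s, hsn, hks⟩ : ∃ s, s ≤ n ∧ k = 2 * n + 2 - s :=
    ⟨2 * n + 2 - k, by omega, by omega⟩
  refine ⟨fun j => decide ((j + s) % 2 = 0 ∨ s ≤ j), ?_⟩
  have hmem : k ∈ {m₀ | ∃ m : ℕ → ℕ, m 0 = m₀ ∧ 2 ≤ m n ∧ (∀ j < n, m (j + 1) < m j) ∧
      ∀ j ∈ sigmaE n (fun j => decide ((j + s) % 2 = 0 ∨ s ≤ j)), Even (m j)} := by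
    refine ⟨fun j => 2 * n + 2 - j - max j s, ?_, ?_, ?_, ?_⟩
    · show 2 * n + 2 - 0 - max 0 s = k; omega
    · show 2 ≤ 2 * n + 2 - n - max n s; omega
    · intro j hj
      show 2 * n + 2 - (j + 1) - max (j + 1) s < 2 * n + 2 - j - max j s
      omega
    · intro j hj
      rw [Nat.even_iff]
      simp only [sigmaE, Set.mem_setOf_eq, decide_eq_true_eq,
        decide_eq_false_iff_not] at hj
      show (2 * n + 2 - j - max j s) % 2 = 0
      omega
  unfold kappa
  refine le_antisymm (Nat.sInf_le hmem) (le_csInf ⟨k, hmem⟩ ?_)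
  rintro m₀ ⟨m, hm0, hmn, hdec, hev⟩
  have key : ∀ t, t ≤ n → 2 * n + 2 - (n - t) - max (n - t) s ≤ m (n - t) := by
    intro t
    induction t with
    | zero =>
      intro _
      simp only [Nat.sub_zero]
      omega
    | succ t ih =>
      intro ht
      have hih := ih (by omega)
      have hj1 : n - t = (n - (t + 1)) + 1 := by omega
      rw [hj1] at hih
      have hd := hdec (n - (t + 1)) (by omega)
      by_cases hjs : s ≤ n - (t + 1)
      · have hjE : (n - (t + 1)) ∈ sigmaE n (fun j => decide ((j + s) % 2 = 0 ∨ s ≤ j)) := by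
          simp only [sigmaE, Set.mem_setOf_eq, decide_eq_true_eq,
            decide_eq_false_iff_not]
          by_cases hj0 : n - (t + 1) = 0
          · exact Or.inr (Or.inl ⟨hj0, by omega⟩)
          · exact Or.inr (Or.inr ⟨by omega, by omega, fun h => h.2 (Or.inr hjs)⟩)
        have hevj := hev _ hjE
        rw [Nat.even_iff] at hevj
        omega
      · omega
  have h0 := key n le_rfl
  simp only [Nat.sub_self] at h0
  omega
end
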